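/- arXiv:2001.07228 — 5 statements merged into one kernel-verified Lean document; each statement's English description precedes it below -/
import Mathlib

section
/- Let (X,d) be a finitely injective, approximately G-ultrahomogeneous metric space with an isometry group G ≤ Iso(X) acting with the pointwise convergence topology. Suppose ν : X → K is a G-equivariant compactification (continuous G-map with dense image into a compact Hausdorff G-space) that is not injective. Then ν is constant, i.e., the compactification is trivial. -/
/-- Let `X` be a finitely injective, approximately `G`-ultrahomogeneous metric space with
an isometric `G`-action, and let `ν : X → K` be a `G`-equivariant compactification
(a continuous equivariant map with dense image into a compact Hausdorff `G`-space).
If `ν` is not injective, then `ν` is constant. -/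
theorem stmt_9 {X : Type*} [MetricSpace X] {G : Type*} [Group G] [MulAction G X]
    {K : Type*} [TopologicalSpace K] [CompactSpace K] [T2Space K] [MulAction G K]
    (hiso : ∀ (g : G) (a b : X), dist (g • a) (g • b) = dist a b)
    (hinj : ∀ (A : Finset X) (ξ : X → ℝ),
      (∀ a ∈ A, ∀ b ∈ A, |ξ a - ξ b| ≤ dist a b ∧ dist a b ≤ ξ a + ξ b) →
      (∀ a ∈ A, ENNReal.ofReal (ξ a) ≤ EMetric.diam (Set.univ : Set X)) →
      ∃ y : X, ∀ a ∈ A, dist y a = ξ a)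
    (hhom : ∀ ε : ℝ, 0 < ε → ∀ (A : Finset X) (p : X → X),
      (∀ a ∈ A, ∀ b ∈ A, dist (p a) (p b) = dist a b) →
      ∃ g : G, ∀ a ∈ A, dist (p a) (g • a) < ε)
    (ν : X → K) (hν : Continuous ν) (hdense : DenseRange ν)
    (hequi : ∀ (g : G) (x : X), ν (g • x) = g • ν x)
    (hni : ¬ Function.Injective ν) :
    ∀ x y : X, ν x = ν y := by
  classical
  rw [Function.Injective] at hni
  push_neg at hni
  obtain ⟨a, b, hab, hne⟩ := hni
  have hr : 0 < dist a b := dist_pos.mpr hne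
  set r := dist a b with hrdef
  have hdiam : ENNReal.ofReal r ≤ EMetric.diam (Set.univ : Set X) := by
    rw [hrdef, ← edist_dist]
    exact EMetric.edist_le_diam_of_mem (Set.mem_univ _) (Set.mem_univ _)
  -- Step 1: any pair at distance exactly r is identified
  have key : ∀ x y : X, dist x y = r → ν x = ν y := by
    intro x y hxy
    have hchoose : ∀ n : ℕ, ∃ g : G,
        dist x (g • a) < 1/(n+1) ∧ dist y (g • b) < 1/(n+1) := by
      intro n
      have hcond : ∀ u ∈ ({a, b} : Finset X), ∀ v ∈ ({a, b} : Finset X),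
          dist ((fun z => if z = a then x else y) u)
            ((fun z => if z = a then x else y) v) = dist u v := by
        intro u hu v hv
        simp only [Finset.mem_insert, Finset.mem_singleton] at hu hv
        rcases hu with hu | hu <;> rcases hv with hv | hv <;> rw [hu, hv] <;>
          simp [dist_comm, if_neg (Ne.symm hne), hxy] <;> exact hrdef
      obtain ⟨g, hg⟩ := hhom (1/(n+1)) (by positivity) {a, b}
        (fun z => if z = a then x else y) hcond
      refine ⟨g, ?_, ?_⟩
      · have := hg a (by simp); simpa using this
      · have := hg b (by simp)
        simpa [if_neg (Ne.symm hne)] using this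
    choose g hg1 hg2 using hchoose
    have hlim : Filter.Tendsto (fun n : ℕ => (1:ℝ)/(n+1)) Filter.atTop (nhds 0) :=
      tendsto_one_div_add_atTop_nhds_zero_nat
    have ht1 : Filter.Tendsto (fun n => (g n) • a) Filter.atTop (nhds x) := by
      rw [tendsto_iff_dist_tendsto_zero]
      exact squeeze_zero (fun n => dist_nonneg)
        (fun n => by rw [dist_comm]; exact (hg1 n).le) hlim
    have ht2 : Filter.Tendsto (fun n => (g n) • b) Filter.atTop (nhds y) := by
      rw [tendsto_iff_dist_tendsto_zero]
      exact squeeze_zero (fun n => dist_nonneg)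
        (fun n => by rw [dist_comm]; exact (hg2 n).le) hlim
    have hν1 : Filter.Tendsto (fun n => ν ((g n) • a)) Filter.atTop (nhds (ν x)) :=
      (hν.tendsto x).comp ht1
    have hν2 : Filter.Tendsto (fun n => ν ((g n) • b)) Filter.atTop (nhds (ν y)) :=
      (hν.tendsto y).comp ht2
    have heq : (fun n => ν ((g n) • a)) = (fun n => ν ((g n) • b)) := by
      funext n; rw [hequi, hequi, hab]
    rw [heq] at hν1
    exact tendsto_nhds_unique hν1 hν2
  -- Step 2: pairs at distance ≤ 2r
  have key2 : ∀ x y : X, dist x y ≤ 2 * r → ν x = ν y := by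
    intro x y hxy
    have hcond : ∀ u ∈ ({x, y} : Finset X), ∀ v ∈ ({x, y} : Finset X),
        |(fun _ : X => r) u - (fun _ : X => r) v| ≤ dist u v ∧
          dist u v ≤ (fun _ : X => r) u + (fun _ : X => r) v := by
      intro u hu v hv
      simp only [Finset.mem_insert, Finset.mem_singleton] at hu hv
      refine ⟨by simpa using dist_nonneg (x := u) (y := v), ?_⟩
      rcases hu with hu | hu <;> rcases hv with hv | hv <;> rw [hu, hv]
      · rw [dist_self]; linarith
      · linarith
      · rw [dist_comm]; linarith
      · rw [dist_self]; linarith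
    obtain ⟨z, hz⟩ := hinj {x, y} (fun _ => r) hcond (fun u _ => hdiam)
    have h1 := hz x (by simp)
    have h2 := hz y (by simp)
    exact (key z x h1).symm.trans (key z y h2)
  -- Main induction
  have main : ∀ n : ℕ, ∀ x y : X, dist x y ≤ n * r → ν x = ν y := by
    intro n
    induction n with
    | zero =>
      intro x y h
      simp only [Nat.cast_zero, zero_mul] at h
      have : x = y := by rw [← dist_le_zero]; exact h
      rw [this]
    | succ n ih =>
      intro x y h
      by_cases hc : dist x y ≤ 2 * r
      · exact key2 x y hc
      · push_neg at hc
        have hxyne : x ≠ y := by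
          intro he; rw [he, dist_self] at hc; linarith
        have hyx : ¬ (y = x) := fun he => hxyne he.symm
        have hcond : ∀ u ∈ ({x, y} : Finset X), ∀ v ∈ ({x, y} : Finset X),
            |(fun w => if w = x then r else dist x y - r) u -
              (fun w => if w = x then r else dist x y - r) v| ≤ dist u v ∧
              dist u v ≤ (fun w => if w = x then r else dist x y - r) u +
                (fun w => if w = x then r else dist x y - r) v := by
          intro u hu v hv
          simp only [Finset.mem_insert, Finset.mem_singleton] at hu hv
          rcases hu with hu | hu <;> rcases hv with hv | hv <;> rw [hu, hv] <;>
            simp only [eq_self_iff_true, if_true, if_neg hyx]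
          · exact ⟨by simp, by rw [dist_self]; linarith⟩
          · constructor
            · rw [abs_le]; constructor <;> linarith
            · linarith
          · constructor
            · rw [abs_le, dist_comm]; constructor <;> linarith
            · rw [dist_comm]; linarith
          · exact ⟨by simp, by rw [dist_self]; linarith⟩
        have hdiam2 : ∀ u ∈ ({x, y} : Finset X),
            ENNReal.ofReal ((fun w => if w = x then r else dist x y - r) u) ≤
              EMetric.diam (Set.univ : Set X) := by
          intro u hu
          simp only [Finset.mem_insert, Finset.mem_singleton] at hu
          rcases hu with hu | hu <;> rw [hu]
          · simpa using hdiam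
          · simp only [if_neg hyx]
            calc ENNReal.ofReal (dist x y - r) ≤ ENNReal.ofReal (dist x y) :=
                  ENNReal.ofReal_le_ofReal (by linarith)
              _ = edist x y := (edist_dist x y).symm
              _ ≤ _ := EMetric.edist_le_diam_of_mem (Set.mem_univ _) (Set.mem_univ _)
        obtain ⟨z, hz⟩ := hinj {x, y}
          (fun w => if w = x then r else dist x y - r) hcond hdiam2
        have h1 := hz x (by simp)
        have h2 := hz y (by simp)
        simp only [eq_self_iff_true, if_true] at h1
        simp only [if_neg hyx] at h2
        have e1 : ν z = ν x := key z x h1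
        have e2 : ν z = ν y := by
          apply ih z y
          rw [h2]
          push_cast at h ⊢
          linarith
        exact e1.symm.trans e2
  intro x y
  obtain ⟨n, hn⟩ := exists_nat_ge (dist x y / r)
  apply main n x y
  rw [div_le_iff₀ hr] at hn
  linarith
end

section
/- Let G ↷ X be a continuous action of a Polish group G on a Polish metric space X, and let x ∈ X. If x is weakly generic (for every open neighborhood U of the identity there is δ > 0 with B_δ(x) ∩ cl(Gx) ⊆ cl(Ux)), then the orbit Gx is non-meager in its closure cl(Gx). -/
open Pointwise in

/-- For a continuous action of a Polish group `G` on a Polish metric space `X`: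
if `x` is weakly generic (for every neighborhood `U` of the identity there is `δ > 0`
with `B_δ(x) ∩ cl(Gx) ⊆ cl(Ux)`), then the orbit `Gx` is non-meager in its closure. -/
theorem stmt_15 {G : Type*} [TopologicalSpace G] [Group G] [IsTopologicalGroup G]
    [PolishSpace G] {X : Type*} [MetricSpace X] [PolishSpace X]
    [MulAction G X] [ContinuousSMul G X] (x : X)
    (hwg : ∀ U ∈ nhds (1 : G), ∃ δ > (0 : ℝ),
      Metric.ball x δ ∩ closure (MulAction.orbit G x) ⊆
        closure ((fun g : G => g • x) '' U)) :
    ¬ IsMeagre (Subtype.val ⁻¹' (MulAction.orbit G x) :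
        Set {y : X // y ∈ closure (MulAction.orbit G x)}) := by
  intro hm
  set Y : Set X := closure (MulAction.orbit G x) with hYdef
  have hYclosed : IsClosed Y := isClosed_closure
  obtain ⟨S, hND, hScnt, hcover⟩ := isMeagre_iff_countable_union_isNowhereDense.mp hm
  haveI : Countable S := hScnt.to_subtype
  have hxY : ∀ g : G, g • x ∈ Y := fun g => subset_closure (MulAction.mem_orbit x g)
  set π : G → {y : X // y ∈ Y} := fun g => ⟨g • x, hxY g⟩ with hπdef
  have hπ : Continuous π :=
    Continuous.subtype_mk (continuous_id.smul continuous_const) _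
  haveI : BaireSpace G :=
    BaireSpace.of_completelyPseudoMetrizable
  have hcover' : ⋃ t : S, π ⁻¹' (closure (t : Set {y : X // y ∈ Y})) = Set.univ := by
    ext g
    simp only [Set.mem_iUnion, Set.mem_univ, iff_true, Set.mem_preimage]
    obtain ⟨t, htS, hgt⟩ := hcover (show π g ∈ _ from MulAction.mem_orbit x g)
    exact ⟨⟨t, htS⟩, subset_closure hgt⟩
  obtain ⟨t, g₀, hg₀⟩ := nonempty_interior_of_iUnion_of_closed
    (fun t : S => isClosed_closure.preimage hπ) hcover'
  -- the closed set in X corresponding to `closure t`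
  set F : Set X := Subtype.val '' closure (t : Set {y : X // y ∈ Y}) with hFdef
  have hFclosed : IsClosed F :=
    hYclosed.isClosedEmbedding_subtypeVal.isClosedMap _ isClosed_closure
  set V : Set G := interior (π ⁻¹' (closure (t : Set {y : X // y ∈ Y}))) with hVdef
  have hVopen : IsOpen V := isOpen_interior
  have hVF : ∀ g ∈ V, g • x ∈ F := by
    intro g hg
    have h2 : g ∈ π ⁻¹' (closure (t : Set {y : X // y ∈ Y})) := interior_subset hg
    exact ⟨π g, h2, rfl⟩
  -- translate V to a neighborhood of 1
  set V' : Set G := (fun h => g₀⁻¹ * h) '' V with hV'def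
  have hV'nhds : V' ∈ nhds (1 : G) := by
    have hopen : IsOpen V' := (Homeomorph.mulLeft g₀⁻¹).isOpenMap V hVopen
    have h1 : (1 : G) ∈ V' := ⟨g₀, hg₀, inv_mul_cancel g₀⟩
    exact hopen.mem_nhds h1
  obtain ⟨ε, hε, hball⟩ := hwg V' hV'nhds
  -- the homeomorphism given by g₀
  set φ : X ≃ₜ X := Homeomorph.smul g₀ with hφdef
  have hφimg : φ '' ((fun g : G => g • x) '' V') ⊆ F := by
    rintro _ ⟨_, ⟨h, ⟨g, hgV, rfl⟩, rfl⟩, rfl⟩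
    have : φ ((g₀⁻¹ * g) • x) = g • x := by
      simp [hφdef, Homeomorph.smul, ← mul_smul, mul_assoc]
    rw [this]
    exact hVF g hgV
  have hcl : φ '' closure ((fun g : G => g • x) '' V') ⊆ F := by
    rw [φ.image_closure]
    exact closure_minimal hφimg hFclosed
  have hφY : φ '' Y = Y := by
    have himg : φ '' MulAction.orbit G x = MulAction.orbit G x := by
      have h1 : φ '' MulAction.orbit G x = g₀ • MulAction.orbit G x :=
        rfl
      rw [h1, MulAction.smul_orbit]
    rw [hYdef, φ.image_closure, himg]
  -- find a small ball around g₀ • x inside φ '' (ball x ε)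
  have hφball : IsOpen (φ '' Metric.ball x ε) := φ.isOpenMap _ Metric.isOpen_ball
  have hφx : φ x ∈ φ '' Metric.ball x ε :=
    ⟨x, Metric.mem_ball_self hε, rfl⟩
  obtain ⟨δ, hδ, hδball⟩ := Metric.isOpen_iff.mp hφball (φ x) hφx
  have hkey : Metric.ball (g₀ • x) δ ∩ Y ⊆ F := by
    intro y hy
    have hy1 : y ∈ φ '' Metric.ball x ε := hδball hy.1
    have hy2 : y ∈ φ '' Y := by rw [hφY]; exact hy.2
    have : y ∈ φ '' (Metric.ball x ε ∩ Y) := by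
      rw [Set.image_inter φ.injective]
      exact ⟨hy1, hy2⟩
    exact hcl (Set.image_mono hball this)
  -- derive contradiction with nowhere density of t
  have hy₀ : (⟨g₀ • x, hxY g₀⟩ : {y : X // y ∈ Y}) ∈
      interior (closure (t : Set {y : X // y ∈ Y})) := by
    apply mem_interior.mpr
    refine ⟨Subtype.val ⁻¹' Metric.ball (g₀ • x) δ, ?_, ?_, ?_⟩
    · intro z hz
      have : (z : X) ∈ F := hkey ⟨hz, z.2⟩
      obtain ⟨w, hw, hwz⟩ := this
      rwa [← Subtype.coe_injective hwz]
    · exact Metric.isOpen_ball.preimage continuous_subtype_val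
    · exact Metric.mem_ball_self hδ
  have := hND t t.2
  rw [IsNowhereDense] at this
  rw [this] at hy₀
  exact hy₀
end

section
/- Let G ↷ X be a continuous isometric action of a Polish group on a Polish metric space. If the action is weakly micro-transitive (every point is weakly generic) then every orbit is closed. -/
open Topology Set Filter MulAction

set_option linter.unusedSectionVars false


section Hull
variable {α : Type*} [TopologicalSpace α]

lemma myIsMeagre_biUnion {ι : Type*} {t : Set ι} (ht : t.Countable) {s : ι → Set α}
    (h : ∀ i ∈ t, IsMeagre (s i)) : IsMeagre (⋃ i ∈ t, s i) := by
  unfold IsMeagre at *; rw [compl_iUnion₂]; exact (countable_bInter_mem ht).2 h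

lemma myNot_isMeagre_of_isOpen [BaireSpace α] {U : Set α} (hU : IsOpen U) (hne : U.Nonempty) :
    ¬ IsMeagre U := by
  intro h
  obtain ⟨w, hw1, hw2⟩ := (dense_of_mem_residual h).inter_open_nonempty U hU hne
  exact hw2 hw1

variable [SecondCountableTopology α]

/-- union of all open sets whose intersection with `S` is meager -/
def meagerKernel (S : Set α) : Set α := ⋃₀ {U | IsOpen U ∧ IsMeagre (S ∩ U)}

lemma isOpen_meagerKernel (S : Set α) : IsOpen (meagerKernel S) :=
  isOpen_sUnion fun _ h => h.1

lemma isMeagre_inter_meagerKernel (S : Set α) : IsMeagre (S ∩ meagerKernel S) := by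
  obtain ⟨T, hTc, hTsub, hTU⟩ :=
    TopologicalSpace.isOpen_sUnion_countable {U | IsOpen U ∧ IsMeagre (S ∩ U)} (fun s hs => hs.1)
  have hE : S ∩ meagerKernel S = ⋃ U ∈ T, S ∩ U := by
    rw [meagerKernel, ← hTU]
    ext w
    simp only [mem_inter_iff, mem_sUnion, mem_iUnion, exists_prop]
    tauto
  rw [hE]
  exact myIsMeagre_biUnion hTc fun U hU => (hTsub hU).2

/-- Baire hull of a set -/
def baireHull (S : Set α) : Set α := S ∪ (meagerKernel S)ᶜ

lemma subset_baireHull (S : Set α) : S ⊆ baireHull S := subset_union_left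

lemma baireMeasurableSet_baireHull (S : Set α) : BaireMeasurableSet (baireHull S) := by
  have hE : baireHull S = (meagerKernel S)ᶜ ∪ (S ∩ meagerKernel S) := by
    ext w
    simp only [baireHull, mem_union, mem_compl_iff, mem_inter_iff]
    tauto
  rw [hE]
  exact ((isOpen_meagerKernel S).baireMeasurableSet.compl).union
    (isMeagre_inter_meagerKernel S).baireMeasurableSet

lemma isMeagre_of_subset_baireHull_diff [BaireSpace α] {S T : Set α}
    (hT : BaireMeasurableSet T) (hsub : T ⊆ baireHull S \ S) : IsMeagre T := by
  by_contra hnm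
  obtain ⟨U, hUopen, hequiv⟩ := hT.residualEq_isOpen
  have hsymm : ∀ᵇ (w : α), w ∈ T ↔ w ∈ U := by
    filter_upwards [hequiv] with w hw
    rw [show (w ∈ T) = (w ∈ U) from hw]
  have hTU : IsMeagre (T \ U) := by
    unfold IsMeagre
    filter_upwards [hsymm] with w hw
    simp only [mem_compl_iff, mem_diff, not_and, not_not]
    exact fun h => (hw.1 h)
  have hUT : IsMeagre (U \ T) := by
    unfold IsMeagre
    filter_upwards [hsymm] with w hw
    simp only [mem_compl_iff, mem_diff, not_and, not_not]
    exact fun h => (hw.2 h)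
  have hTW : ∀ w ∈ T, w ∉ meagerKernel S ∧ w ∉ S := by
    intro w hw
    have := hsub hw
    rcases this with ⟨h1, h2⟩
    rcases h1 with h1 | h1
    · exact absurd h1 h2
    · exact ⟨h1, h2⟩
  have hUne : U.Nonempty := by
    rcases eq_empty_or_nonempty U with rfl | h
    · exact absurd (hTU.mono (by simp)) hnm
    · exact h
  -- S ∩ U is meager
  have hSU : IsMeagre (S ∩ U) := by
    apply hUT.mono
    intro w ⟨hwS, hwU⟩
    exact ⟨hwU, fun hwT => (hTW w hwT).2 hwS⟩
  -- hence U ⊆ meagerKernel S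
  have hUW : U ⊆ meagerKernel S := subset_sUnion_of_mem ⟨hUopen, hSU⟩
  -- so U ⊆ U \ T, meager
  have : IsMeagre U := by
    apply hUT.mono
    intro w hw
    exact ⟨hw, fun hwT => (hTW w hwT).1 (hUW hw)⟩
  exact myNot_isMeagre_of_isOpen hUopen hUne this

end Hull

lemma myIsMeagre_iUnion {α : Type*} [TopologicalSpace α] {ι : Sort*} [Countable ι] {s : ι → Set α}
    (h : ∀ i, IsMeagre (s i)) : IsMeagre (⋃ i, s i) := by
  unfold IsMeagre at *
  rw [compl_iUnion]
  exact countable_iInter_mem.2 h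

lemma IsMeagre.image_homeo {α β : Type*} [TopologicalSpace α] [TopologicalSpace β] (h : α ≃ₜ β) {s : Set α}
    (hs : IsMeagre s) : IsMeagre (h '' s) := by
  unfold IsMeagre at *
  rw [← image_compl_eq h.bijective, ← h.residual_map_eq, mem_map,
    preimage_image_eq _ h.injective]
  exact hs

theorem baireMeasurableSet_range_of_continuous {α : Type*} [MetricSpace α]
    [SecondCountableTopology α] [BaireSpace α]
    (f : (ℕ → ℕ) → α) (hf : Continuous f) : BaireMeasurableSet (range f) := by
  classical
  -- cylinders
  set N : List ℕ → Set (ℕ → ℕ) := fun σ => {p | ∀ i, i < σ.length → p i = σ.getD i 0} with hN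
  set A : List ℕ → Set α := fun σ => f '' N σ with hA
  set H : List ℕ → Set α := fun σ => baireHull (A σ) ∩ closure (A σ) with hH
  have hAH : ∀ σ, A σ ⊆ H σ := fun σ =>
    subset_inter (subset_baireHull _) subset_closure
  have hHBM : ∀ σ, BaireMeasurableSet (H σ) := fun σ =>
    (baireMeasurableSet_baireHull _).inter (BaireMeasurableSet.of_compl (isClosed_closure.isOpen_compl.baireMeasurableSet))
  -- splitting of cylinders
  have hAsplit : ∀ σ, A σ ⊆ ⋃ n, A (σ ++ [n]) := by
    intro σ z hz
    obtain ⟨p, hp, rfl⟩ := hz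
    refine mem_iUnion.2 ⟨p σ.length, ⟨p, ?_, rfl⟩⟩
    intro i hi
    rw [List.length_append, List.length_singleton] at hi
    rcases lt_or_ge i σ.length with h | h
    · rw [List.getD_append _ _ _ _ h]
      exact hp i h
    · have : i = σ.length := by omega
      subst this
      rw [List.getD_append_right _ _ _ _ le_rfl]
      simp
  -- the meager differences
  set M : List ℕ → Set α := fun σ => H σ \ ⋃ n, H (σ ++ [n]) with hM
  have hMmeager : ∀ σ, IsMeagre (M σ) := by
    intro σ
    apply isMeagre_of_subset_baireHull_diff (S := A σ)
    · exact ((hHBM σ).diff (BaireMeasurableSet.iUnion fun n => hHBM (σ ++ [n])))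
    · intro z hz
      refine ⟨hz.1.1, fun hzA => hz.2 ?_⟩
      obtain ⟨n, hn⟩ := mem_iUnion.1 (hAsplit σ hzA)
      exact mem_iUnion.2 ⟨n, hAH _ hn⟩
  have hMstar : IsMeagre (⋃ σ : List ℕ, M σ) := myIsMeagre_iUnion hMmeager
  -- main claim
  have hclaim : H [] \ (⋃ σ : List ℕ, M σ) ⊆ range f := by
    rintro z ⟨hzH, hzM⟩
    have hstep : ∀ σ, z ∈ H σ → ∃ k, z ∈ H (σ ++ [k]) := by
      intro σ hσ
      by_contra hcon
      push_neg at hcon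
      exact hzM (mem_iUnion.2 ⟨σ, hσ, fun hz => by
        obtain ⟨k, hk⟩ := mem_iUnion.1 hz
        exact hcon k hk⟩)
    -- build the branch
    let ext : List ℕ → List ℕ := fun σ =>
      if h : ∃ k, z ∈ H (σ ++ [k]) then σ ++ [h.choose] else σ
    let g : ℕ → List ℕ := fun n => Nat.rec ([] : List ℕ) (fun _ σ => ext σ) n
    have hg0 : g 0 = [] := rfl
    have hgsucc : ∀ n, g (n + 1) = ext (g n) := fun n => rfl
    have hinv : ∀ n, z ∈ H (g n) := by
      intro n
      induction n with
      | zero => exact hzH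
      | succ n ih =>
        rw [hgsucc]
        have hex := hstep (g n) ih
        simp only [ext, dif_pos hex]
        exact hex.choose_spec
    have hgext : ∀ n, ∃ k, g (n + 1) = g n ++ [k] := by
      intro n
      rw [hgsucc]
      have hex := hstep (g n) (hinv n)
      simp only [ext, dif_pos hex]
      exact ⟨hex.choose, rfl⟩
    have hlen : ∀ n, (g n).length = n := by
      intro n
      induction n with
      | zero => rfl
      | succ n ih =>
        obtain ⟨k, hk⟩ := hgext n
        rw [hk, List.length_append, List.length_singleton, ih]
    have hstab : ∀ n m, n ≤ m → ∀ i, i < n → (g m).getD i 0 = (g n).getD i 0 := by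
      intro n m hnm
      induction m with
      | zero => intro i hi; exact absurd hi (by omega)
      | succ m ih =>
        intro i hi
        rcases Nat.lt_or_ge n (m+1) with h | h
        · have h' : n ≤ m := by omega
          obtain ⟨k, hk⟩ := hgext m
          rw [hk, List.getD_append _ _ _ _ (by rw [hlen]; omega)]
          exact ih h' i hi
        · have : n = m + 1 := by omega
          subst this; rfl
    -- the limit branch
    let x : ℕ → ℕ := fun i => (g (i + 1)).getD i 0
    -- approximating points
    have happrox : ∀ n : ℕ, ∃ p ∈ N (g n), dist z (f p) < 1 / (n + 1) := by
      intro n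
      have hzc : z ∈ closure (A (g n)) := (hinv n).2
      have hpos : (0 : ℝ) < 1 / (n + 1) := by positivity
      obtain ⟨b, hb, hdist⟩ := Metric.mem_closure_iff.1 hzc _ hpos
      obtain ⟨p, hp, rfl⟩ := hb
      exact ⟨p, hp, hdist⟩
    choose p hpN hpdist using happrox
    have hptend : Tendsto p atTop (𝓝 x) := by
      rw [tendsto_pi_nhds]
      intro i
      apply Tendsto.congr' (f₁ := fun _ => x i)
      · filter_upwards [eventually_ge_atTop (i + 1)] with n hn
        have h1 : p n i = (g n).getD i 0 := hpN n i (by rw [hlen]; omega)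
        have h2 : (g n).getD i 0 = (g (i+1)).getD i 0 := hstab (i+1) n hn i (by omega)
        rw [h1, h2]
      · exact tendsto_const_nhds
    have hftend : Tendsto (fun n => f (p n)) atTop (𝓝 (f x)) :=
      (hf.tendsto x).comp hptend
    have hztend : Tendsto (fun n => f (p n)) atTop (𝓝 z) := by
      rw [tendsto_iff_dist_tendsto_zero]
      apply squeeze_zero (fun n => dist_nonneg) (fun n => ?_) tendsto_one_div_add_atTop_nhds_zero_nat
      rw [dist_comm]
      exact (hpdist n).le
    exact ⟨x, tendsto_nhds_unique hftend hztend⟩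
  -- conclude
  have hrsub : range f ⊆ H [] := by
    have h1 : range f = A [] := by
      rw [hA]
      have : N [] = univ := by ext p; simp [hN]
      simp only [this, image_univ]
    rw [h1]
    exact hAH []
  have hdm : IsMeagre (H [] \ range f) := by
    apply hMstar.mono
    intro w hw
    by_contra hcon
    exact hw.2 (hclaim ⟨hw.1, hcon⟩)
  have : range f = H [] \ (H [] \ range f) := by
    ext w
    simp only [mem_diff]
    constructor
    · intro h; exact ⟨hrsub h, fun h2 => h2.2 h⟩
    · intro h
      by_contra hcon
      exact h.2 ⟨h.1, hcon⟩
  rw [this]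
  exact (hHBM []).diff hdm.baireMeasurableSet

theorem polishBaire (α : Type*) [TopologicalSpace α] [PolishSpace α] : BaireSpace α := by
  letI := TopologicalSpace.upgradeIsCompletelyMetrizable α; infer_instance

/-- If a continuous isometric action of a Polish group on a Polish metric space is
weakly micro-transitive (every point is weakly generic), then every orbit is closed. -/
theorem stmt_16 {G : Type*} [TopologicalSpace G] [Group G] [IsTopologicalGroup G]
    [PolishSpace G] {X : Type*} [MetricSpace X] [PolishSpace X]
    [MulAction G X] [ContinuousSMul G X]
    (hiso : ∀ (g : G) (a b : X), dist (g • a) (g • b) = dist a b)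
    (hwmt : ∀ x : X, ∀ U ∈ nhds (1 : G), ∃ δ > (0 : ℝ),
      Metric.ball x δ ∩ closure (MulAction.orbit G x) ⊆
        closure ((fun g : G => g • x) '' U)) :
    ∀ x : X, IsClosed (MulAction.orbit G x) := by
  classical
  have inv : ∀ (z : X) (g : G) (w : X), w ∈ closure (orbit G z) → g • w ∈ closure (orbit G z) := by
    intro z g w hw
    have hmap : MapsTo (fun w : X => g • w) (orbit G z) (orbit G z) := by
      intro a ha
      obtain ⟨h, rfl⟩ := mem_orbit_iff.1 ha
      exact mem_orbit_iff.2 ⟨g * h, (mul_smul g h z).symm ▸ rfl⟩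
    exact (hmap.closure (continuous_const.smul continuous_id)) hw
  have swap : ∀ (a b : X), a ∈ closure (orbit G b) → b ∈ closure (orbit G a) := by
    intro a b hab
    rw [Metric.mem_closure_iff]
    intro ε hε
    obtain ⟨c, hc, hd⟩ := Metric.mem_closure_iff.1 hab ε hε
    obtain ⟨g, rfl⟩ := mem_orbit_iff.1 hc
    refine ⟨g⁻¹ • a, mem_orbit_iff.2 ⟨g⁻¹, rfl⟩, ?_⟩
    have h1 := hiso g b (g⁻¹ • a)
    rw [smul_inv_smul] at h1
    rw [← h1, dist_comm]
    exact hd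
  intro x
  apply isClosed_of_closure_subset
  intro y hy
  set C := closure (orbit G x) with hC
  have hxC : x ∈ C := subset_closure (mem_orbit_self x)
  have horbclos : ∀ z, z ∈ C → closure (orbit G z) = C := by
    intro z hz
    apply Subset.antisymm
    · apply closure_minimal _ isClosed_closure
      intro w hw
      obtain ⟨g, rfl⟩ := mem_orbit_iff.1 hw
      exact inv x g z hz
    · have hx : x ∈ closure (orbit G z) := swap z x hz
      apply closure_minimal _ isClosed_closure
      intro w hw
      obtain ⟨g, rfl⟩ := mem_orbit_iff.1 hw
      exact inv z g x hx
  have hCclosed : IsClosed C := isClosed_closure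
  haveI hKpolish : PolishSpace ↥C := hCclosed.polishSpace
  haveI hKbaire : BaireSpace ↥C := polishBaire ↥C
  haveI hGbaire : BaireSpace G := polishBaire G
  haveI : Nonempty ↥C := ⟨⟨x, hxC⟩⟩
  haveI : Nonempty G := ⟨1⟩
  set S : X → Set ↥C := fun z => Subtype.val ⁻¹' (orbit G z) with hS
  -- Baire measurability of orbits in C
  have hSBM : ∀ z, z ∈ C → BaireMeasurableSet (S z) := by
    intro z hz
    obtain ⟨u, hu, husurj⟩ := PolishSpace.exists_nat_nat_continuous_surjective G
    have hrange : range (fun p => (⟨u p • z, inv x (u p) z hz⟩ : ↥C)) = S z := by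
      ext w
      simp only [hS, mem_preimage, mem_range]
      constructor
      · rintro ⟨p, rfl⟩
        exact mem_orbit_iff.2 ⟨u p, rfl⟩
      · intro hw
        obtain ⟨g, hg⟩ := mem_orbit_iff.1 hw
        obtain ⟨p, rfl⟩ := husurj g
        exact ⟨p, Subtype.ext hg⟩
    rw [← hrange]
    exact baireMeasurableSet_range_of_continuous _
      (Continuous.subtype_mk (hu.smul continuous_const) _)
  -- orbits are non-meager in C
  have hSnm : ∀ z, z ∈ C → ¬ IsMeagre (S z) := by
    intro z hz hmeag
    obtain ⟨t, hts, htGδ, htdense⟩ := mem_residual.1 hmeag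
    obtain ⟨T, hTopen, hTcount, rfl⟩ := htGδ
    haveI := hTcount.to_subtype
    set ψ : G → ↥C := fun g => ⟨g • z, inv x g z hz⟩ with hψdef
    have hψ : Continuous ψ := Continuous.subtype_mk (continuous_id.smul continuous_const) _
    have hψS : ∀ g, ψ g ∈ S z := fun g => mem_orbit_iff.2 ⟨g, rfl⟩
    have hcover : ⋃ (U : T), ψ ⁻¹' ((U : Set ↥C)ᶜ) = univ := by
      apply eq_univ_iff_forall.2
      intro g
      have h2 : ψ g ∉ ⋂₀ T := fun hmem => (hts hmem) (hψS g)
      simp only [mem_sInter, not_forall] at h2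
      obtain ⟨U, hU1, hU2⟩ := h2
      exact mem_iUnion.2 ⟨⟨U, hU1⟩, hU2⟩
    obtain ⟨U, hUint⟩ := nonempty_interior_of_iUnion_of_closed
      (fun U : T => ((hTopen _ U.2).isClosed_compl).preimage hψ) hcover
    obtain ⟨g₀, hg₀⟩ := hUint
    set z₀ := g₀ • z with hz₀def
    have hz₀C : z₀ ∈ C := inv x g₀ z hz
    set V : Set G := (fun v : G => v * g₀) ⁻¹' (interior (ψ ⁻¹' ((U : Set ↥C)ᶜ))) with hVdef
    have hVnhds : V ∈ nhds (1 : G) := by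
      apply IsOpen.mem_nhds (isOpen_interior.preimage (continuous_mul_right g₀))
      simp only [hVdef, mem_preimage, one_mul]
      exact hg₀
    obtain ⟨δ, hδpos, hδsub⟩ := hwmt z₀ V hVnhds
    have himgsub : (fun g : G => g • z₀) '' V ⊆ Subtype.val '' ((U : Set ↥C)ᶜ) := by
      rintro w ⟨v, hv, rfl⟩
      have hv' : v * g₀ ∈ interior (ψ ⁻¹' ((U : Set ↥C)ᶜ)) := hv
      have h3'' : v * g₀ ∈ ψ ⁻¹' ((U : Set ↥C)ᶜ) := interior_subset hv'
      have h3 : ψ (v * g₀) ∈ (U : Set ↥C)ᶜ := h3''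
      refine ⟨ψ (v * g₀), h3, ?_⟩
      simp only [hψdef, hz₀def]
      rw [mul_smul]
    have hclosedimg : IsClosed (Subtype.val '' ((U : Set ↥C)ᶜ)) :=
      (hCclosed.isClosedEmbedding_subtypeVal.isClosedMap) _ ((hTopen _ U.2).isClosed_compl)
    have h4 : closure ((fun g : G => g • z₀) '' V) ⊆ Subtype.val '' ((U : Set ↥C)ᶜ) :=
      closure_minimal himgsub hclosedimg
    have hUdense : Dense (U : Set ↥C) := htdense.mono (sInter_subset_of_mem U.2)
    have hOopen : IsOpen (Subtype.val ⁻¹' Metric.ball z₀ δ : Set ↥C) :=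
      Metric.isOpen_ball.preimage continuous_subtype_val
    have hOne : (Subtype.val ⁻¹' Metric.ball z₀ δ : Set ↥C).Nonempty := by
      refine ⟨⟨z₀, hz₀C⟩, ?_⟩
      simp [Metric.mem_ball, hδpos]
    obtain ⟨w, hw1, hw2⟩ := hUdense.inter_open_nonempty _ hOopen hOne
    have hwball : (w : X) ∈ Metric.ball z₀ δ ∩ closure (orbit G z₀) := by
      rw [horbclos z₀ hz₀C]
      exact ⟨hw1, w.2⟩
    have := hδsub hwball
    obtain ⟨w', hw', hww⟩ := h4 this
    rw [show w' = w from Subtype.ext hww] at hw'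
    exact hw' hw2
  -- orbits are comeager in C
  have hScom : ∀ z, z ∈ C → S z ∈ residual ↥C := by
    intro z hz
    obtain ⟨U, hUopen, hequiv⟩ := (hSBM z hz).residualEq_isOpen
    have hUS : IsMeagre (U \ S z) := by
      unfold IsMeagre
      filter_upwards [hequiv] with w hw
      simp only [mem_compl_iff, mem_diff, not_and, not_not]
      intro h
      rw [show (w ∈ S z) = (w ∈ U) from hw]
      exact h
    have hSU : IsMeagre (S z \ U) := by
      unfold IsMeagre
      filter_upwards [hequiv] with w hw
      simp only [mem_compl_iff, mem_diff, not_and, not_not]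
      intro h
      rw [← show (w ∈ S z) = (w ∈ U) from hw]
      exact h
    have hUne : U.Nonempty := by
      rcases eq_empty_or_nonempty U with rfl | h
      · exact absurd (hSU.mono (by simp)) (hSnm z hz)
      · exact h
    -- homeomorphisms of C
    let τ : G → (↥C ≃ₜ ↥C) := fun g =>
      { toFun := fun w => ⟨g • (w : X), inv x g w w.2⟩
        invFun := fun w => ⟨g⁻¹ • (w : X), inv x g⁻¹ w w.2⟩
        left_inv := fun w => Subtype.ext (inv_smul_smul g (w : X))
        right_inv := fun w => Subtype.ext (smul_inv_smul g (w : X))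
        continuous_toFun := Continuous.subtype_mk (continuous_const.smul continuous_subtype_val) _
        continuous_invFun := Continuous.subtype_mk (continuous_const.smul continuous_subtype_val) _ }
    have hτS : ∀ g, (τ g) '' (S z) = S z := by
      intro g
      ext w
      constructor
      · rintro ⟨w', hw', rfl⟩
        obtain ⟨h, hh⟩ := mem_orbit_iff.1 hw'
        exact mem_orbit_iff.2 ⟨g * h, by rw [mul_smul, hh]; rfl⟩
      · intro hw
        obtain ⟨h, hh⟩ := mem_orbit_iff.1 hw
        refine ⟨⟨g⁻¹ • (w : X), inv x g⁻¹ w w.2⟩, mem_orbit_iff.2 ⟨g⁻¹ * h, ?_⟩, Subtype.ext (smul_inv_smul g (w : X))⟩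
        simp only [mul_smul, hh]
    have htrans : ∀ g : G, IsMeagre (((τ g) '' U) \ S z) := by
      intro g
      have himg : (τ g) '' (U \ S z) = ((τ g) '' U) \ S z := by
        rw [image_diff (τ g).injective, hτS]
      rw [← himg]
      exact hUS.image_homeo (τ g)
    have hcov : ∀ w : ↥C, ∃ g : G, w ∈ (τ g) '' U := by
      intro w
      obtain ⟨c, hc⟩ := hUne
      obtain ⟨ε, hεpos, hball⟩ := Metric.isOpen_iff.1 hUopen c hc
      have hwC : (w : X) ∈ closure (orbit G (c : X)) := by
        rw [horbclos (c : X) c.2]; exact w.2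
      obtain ⟨b, hb, hdb⟩ := Metric.mem_closure_iff.1 hwC ε hεpos
      obtain ⟨g, rfl⟩ := mem_orbit_iff.1 hb
      refine ⟨g, ⟨g⁻¹ • (w : X), inv x g⁻¹ w w.2⟩, hball ?_, Subtype.ext (smul_inv_smul g (w : X))⟩
      rw [Metric.mem_ball, Subtype.dist_eq]
      have h5 := hiso g (g⁻¹ • (w : X)) (c : X)
      rw [smul_inv_smul] at h5
      rw [h5] at hdb
      exact hdb
    obtain ⟨Tf, hTfc, hTfsub, hTfU⟩ := TopologicalSpace.isOpen_sUnion_countable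
      {W : Set ↥C | ∃ g : G, W = (τ g) '' U}
      (by rintro W ⟨g, rfl⟩; exact (Homeomorph.isOpen_image (τ g)).2 hUopen)
    have hcompl : (S z)ᶜ ⊆ ⋃ W ∈ Tf, (W \ S z) := by
      intro w hw
      obtain ⟨g, hg⟩ := hcov w
      have h6 : w ∈ ⋃₀ Tf := by
        rw [hTfU]
        exact ⟨(τ g) '' U, ⟨g, rfl⟩, hg⟩
      obtain ⟨W, hW1, hW2⟩ := h6
      exact mem_iUnion₂.2 ⟨W, hW1, hW2, hw⟩
    have h7 : IsMeagre ((S z)ᶜ) := by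
      apply IsMeagre.mono hcompl
      apply myIsMeagre_biUnion hTfc
      intro W hW
      obtain ⟨g, rfl⟩ := hTfsub hW
      exact htrans g
    rw [IsMeagre, compl_compl] at h7
    exact h7
  -- endgame
  have hPQ := Filter.inter_mem (hScom x hxC) (hScom y hy)
  obtain ⟨w, hwP, hwQ⟩ := (dense_of_mem_residual hPQ).nonempty
  obtain ⟨gx, hgx⟩ := mem_orbit_iff.1 hwP
  obtain ⟨gy, hgy⟩ := mem_orbit_iff.1 hwQ
  refine mem_orbit_iff.2 ⟨gy⁻¹ * gx, ?_⟩
  rw [mul_smul, hgx, ← hgy, inv_smul_smul]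
end

section
/- Let G be a Polish group and X a Polish metric space with a continuous action G ↷ X. If the action is uniformly weakly micro-transitive (UWMT: for every neighborhood U of the identity there is δ > 0 such that B_δ(x) ∩ cl(Gx) ⊆ cl(Ux) for all x ∈ X), then the action is uniformly micro-transitive (UMT: for every neighborhood U of the identity there is δ > 0 such that B_δ(x) ∩ Gx ⊆ Ux for all x ∈ X). -/
open Metric MulAction Filter Set

/-- Auxiliary: build a sequence by recursion with choice. -/
private theorem effros_exists_seq_rec {α : Type*} (s0 : α) (R : ℕ → α → α → Prop)
    (h : ∀ n a, ∃ b, R n a b) :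
    ∃ f : ℕ → α, f 0 = s0 ∧ ∀ n, R n (f n) (f (n + 1)) := by
  choose g hg using h
  exact ⟨fun n => Nat.rec s0 g n, rfl, fun n => hg n _⟩

/-- State of the two-sided Effros iteration. -/
private structure EffState (G X : Type*) [MetricSpace G] [Group G] [MetricSpace X]
    [MulAction G X] (x y : X) : Type _ where
  p : G
  q : G
  A : Set G
  B : Set G
  d1 : ℝ
  d2 : ℝ
  hA : IsOpen A
  hpA : p ∈ A
  hB : IsOpen B
  hqB : q ∈ B
  hd1 : 0 < d1
  hd2 : 0 < d2
  hu1 : ∀ z : X, Metric.ball z d1 ∩ closure (MulAction.orbit G z) ⊆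
      closure ((fun g : G => g • z) '' {w : G | w * p ∈ A})
  hu2 : ∀ z : X, Metric.ball z d2 ∩ closure (MulAction.orbit G z) ⊆
      closure ((fun g : G => g • z) '' {w : G | w * q ∈ B})
  hdist : dist (p • x) (q • y) < d1

section Eff

variable {G : Type*} [MetricSpace G] [Group G] [IsTopologicalGroup G]
  {X : Type*} [MetricSpace X] [MulAction G X] [ContinuousSMul G X]

private theorem effros_nhds_one {A : Set G} (hA : IsOpen A) {p : G} (hpA : p ∈ A) :
    {w : G | w * p ∈ A} ∈ nhds (1 : G) :=
  (hA.preimage (continuous_mul_right p)).mem_nhds (by simpa using hpA)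

/-- Shrinking an open set around a point. -/
private theorem effros_shrink {A : Set G} (hA : IsOpen A) {p : G} (hpA : p ∈ A)
    {r : ℝ} (hr : 0 < r) :
    ∃ s : ℝ, 0 < s ∧ closure (Metric.ball p s) ⊆ A ∧ Metric.ball p s ⊆ Metric.ball p r := by
  rcases Metric.isOpen_iff.mp hA p hpA with ⟨ε, hε, hball⟩
  have hmin : 0 < min ε r := lt_min hε hr
  refine ⟨min ε r / 2, by positivity, ?_,
    ball_subset_ball ((half_le_self hmin.le).trans (min_le_right ε r))⟩
  refine (Metric.closure_ball_subset_closedBall).trans ?_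
  refine (Metric.closedBall_subset_ball (half_lt_self hmin)).trans ?_
  exact (ball_subset_ball (min_le_left ε r)).trans hball

private theorem effros_step
    (huwmt : ∀ U ∈ nhds (1 : G), ∃ δ > (0 : ℝ), ∀ x : X,
      Metric.ball x δ ∩ closure (MulAction.orbit G x) ⊆
        closure ((fun g : G => g • x) '' U))
    (x y : X) (g0 : G) (hg0 : g0 • x = y)
    (r : ℝ) (hr : 0 < r) (s : EffState G X x y) :
    ∃ t : EffState G X x y, t.p ∈ s.A ∧ t.q ∈ s.B ∧ closure t.A ⊆ s.A ∧ closure t.B ⊆ s.B ∧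
      t.A ⊆ Metric.ball t.p r ∧ t.B ⊆ Metric.ball t.q r ∧
      dist (t.p • x) (t.q • y) < r := by
  -- x-move
  have m1 : s.q • y ∈ MulAction.orbit G (s.p • x) := by
    rw [MulAction.orbit_smul]
    exact MulAction.mem_orbit_iff.mpr ⟨s.q * g0, by rw [mul_smul, hg0]⟩
  have hclose1 : s.q • y ∈ closure ((fun g : G => g • (s.p • x)) '' {w : G | w * s.p ∈ s.A}) :=
    s.hu1 (s.p • x) ⟨Metric.mem_ball.mpr (by rw [dist_comm]; exact s.hdist), subset_closure m1⟩
  rcases Metric.mem_closure_iff.mp hclose1 s.d2 s.hd2 with ⟨z, ⟨w, hw, rfl⟩, hz⟩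
  have hp'A : w * s.p ∈ s.A := hw
  have hd_x : dist ((w * s.p) • x) (s.q • y) < s.d2 := by
    simpa [mul_smul, dist_comm] using hz
  -- shrink A around p'
  rcases effros_shrink s.hA hp'A hr with ⟨ra, hra, hAcl, hAr⟩
  have hW1 : {w' : G | w' * (w * s.p) ∈ Metric.ball (w * s.p) ra} ∈ nhds (1 : G) :=
    effros_nhds_one isOpen_ball (mem_ball_self hra)
  rcases huwmt _ hW1 with ⟨d1', hd1', hu1'⟩
  -- y-move
  have m2 : (w * s.p) • x ∈ MulAction.orbit G (s.q • y) := by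
    rw [MulAction.orbit_smul]
    refine MulAction.mem_orbit_iff.mpr ⟨(w * s.p) * g0⁻¹, ?_⟩
    rw [mul_smul, show g0⁻¹ • y = x from inv_smul_eq_iff.mpr hg0.symm]
  have hclose2 : (w * s.p) • x ∈
      closure ((fun g : G => g • (s.q • y)) '' {w : G | w * s.q ∈ s.B}) :=
    s.hu2 (s.q • y) ⟨Metric.mem_ball.mpr hd_x, subset_closure m2⟩
  rcases Metric.mem_closure_iff.mp hclose2 _ (lt_min hd1' hr) with ⟨z2, ⟨w2, hw2, rfl⟩, hz2⟩
  have hq'B : w2 * s.q ∈ s.B := hw2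
  have hd2x : dist ((w * s.p) • x) ((w2 * s.q) • y) < min d1' r := by
    simpa [mul_smul] using hz2
  -- shrink B around q'
  rcases effros_shrink s.hB hq'B hr with ⟨rb, hrb, hBcl, hBr⟩
  have hW2 : {w' : G | w' * (w2 * s.q) ∈ Metric.ball (w2 * s.q) rb} ∈ nhds (1 : G) :=
    effros_nhds_one isOpen_ball (mem_ball_self hrb)
  rcases huwmt _ hW2 with ⟨d2', hd2', hu2'⟩
  refine ⟨⟨w * s.p, w2 * s.q, Metric.ball (w * s.p) ra, Metric.ball (w2 * s.q) rb,
      d1', d2', isOpen_ball,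
      mem_ball_self hra, isOpen_ball, mem_ball_self hrb, hd1', hd2', hu1', hu2',
      lt_of_lt_of_le hd2x (min_le_left _ _)⟩,
    hp'A, hq'B, hAcl, hBcl, hAr, hBr, lt_of_lt_of_le hd2x (min_le_right _ _)⟩

/-- Main helper: the statement over a complete metric group. -/
private theorem effros_main [CompleteSpace G]
    (huwmt : ∀ U ∈ nhds (1 : G), ∃ δ > (0 : ℝ), ∀ x : X,
      Metric.ball x δ ∩ closure (MulAction.orbit G x) ⊆
        closure ((fun g : G => g • x) '' U)) :
    ∀ U ∈ nhds (1 : G), ∃ δ > (0 : ℝ), ∀ x : X,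
      Metric.ball x δ ∩ MulAction.orbit G x ⊆ (fun g : G => g • x) '' U := by
  intro U hU
  -- find V1 V2 with V1⁻¹ * V2 ⊆ U
  have hc : ContinuousAt (fun pr : G × G => pr.1⁻¹ * pr.2) (1, 1) :=
    ((continuous_fst.inv).mul continuous_snd).continuousAt
  have hU' : (fun pr : G × G => pr.1⁻¹ * pr.2) ⁻¹' U ∈ nhds ((1 : G), (1 : G)) :=
    hc.preimage_mem_nhds (by simpa using hU)
  rcases mem_nhds_prod_iff.mp hU' with ⟨V1, hV1, V2, hV2, hV12⟩
  set A0 := interior (V1 ∩ V2) with hA0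
  have hA0open : IsOpen A0 := isOpen_interior
  have h1A0 : (1 : G) ∈ A0 := mem_interior_iff_mem_nhds.mpr (inter_mem hV1 hV2)
  have hW0 : {w : G | w * (1 : G) ∈ A0} ∈ nhds (1 : G) := effros_nhds_one hA0open h1A0
  rcases huwmt _ hW0 with ⟨d10, hd10, hu10⟩
  refine ⟨d10, hd10, ?_⟩
  intro x y hy
  rcases hy with ⟨hyball, hyorb⟩
  rcases MulAction.mem_orbit_iff.mp hyorb with ⟨g0, hg0⟩
  have hdist0 : dist ((1 : G) • x) ((1 : G) • y) < d10 := by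
    simpa [one_smul, dist_comm] using Metric.mem_ball.mp hyball
  set s0 : EffState G X x y :=
    ⟨1, 1, A0, A0, d10, d10, hA0open, h1A0, hA0open, h1A0, hd10, hd10, hu10, hu10, hdist0⟩
    with hs0
  obtain ⟨F, hF0, hFrel⟩ := effros_exists_seq_rec s0
    (fun n s t => t.p ∈ s.A ∧ t.q ∈ s.B ∧ closure t.A ⊆ s.A ∧ closure t.B ⊆ s.B ∧
      t.A ⊆ Metric.ball t.p ((1 / 2 : ℝ) ^ n) ∧ t.B ⊆ Metric.ball t.q ((1 / 2 : ℝ) ^ n) ∧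
      dist (t.p • x) (t.q • y) < (1 / 2 : ℝ) ^ n)
    (fun n s => effros_step huwmt x y g0 hg0 _ (by positivity) s)
  -- monotone chains
  have hmonoA : ∀ n m, n ≤ m → (F m).A ⊆ (F n).A := by
    intro n m h
    induction h with
    | refl => exact subset_rfl
    | step h ih => exact (subset_closure.trans (hFrel _).2.2.1).trans ih
  have hmonoB : ∀ n m, n ≤ m → (F m).B ⊆ (F n).B := by
    intro n m h
    induction h with
    | refl => exact subset_rfl
    | step h ih => exact (subset_closure.trans (hFrel _).2.2.2.1).trans ih
  -- Cauchy for p and q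
  have hgapP : ∀ k n, k + 1 ≤ n → dist ((F n).p) ((F (k + 1)).p) < (1 / 2 : ℝ) ^ k :=
    fun k n h => (hFrel k).2.2.2.2.1 (hmonoA _ _ h (F n).hpA)
  have hgapQ : ∀ k n, k + 1 ≤ n → dist ((F n).q) ((F (k + 1)).q) < (1 / 2 : ℝ) ^ k :=
    fun k n h => (hFrel k).2.2.2.2.2.1 (hmonoB _ _ h (F n).hqB)
  have hcP : CauchySeq (fun n => (F n).p) := by
    rw [Metric.cauchySeq_iff']
    intro ε hε
    obtain ⟨k, hk⟩ := exists_pow_lt_of_lt_one hε (by norm_num : (1 : ℝ) / 2 < 1)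
    exact ⟨k + 1, fun n hn => lt_trans (hgapP k n hn) hk⟩
  have hcQ : CauchySeq (fun n => (F n).q) := by
    rw [Metric.cauchySeq_iff']
    intro ε hε
    obtain ⟨k, hk⟩ := exists_pow_lt_of_lt_one hε (by norm_num : (1 : ℝ) / 2 < 1)
    exact ⟨k + 1, fun n hn => lt_trans (hgapQ k n hn) hk⟩
  obtain ⟨pl, hpl⟩ := cauchySeq_tendsto_of_complete hcP
  obtain ⟨ql, hql⟩ := cauchySeq_tendsto_of_complete hcQ
  -- limits are in A0
  have hplA0 : pl ∈ A0 := by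
    have h2 : pl ∈ closure (F 1).A :=
      mem_closure_of_tendsto hpl
        (eventually_atTop.mpr ⟨1, fun n hn => hmonoA 1 n hn (F n).hpA⟩)
    have h3 := (hFrel 0).2.2.1 h2
    rwa [hF0] at h3
  have hqlA0 : ql ∈ A0 := by
    have h2 : ql ∈ closure (F 1).B :=
      mem_closure_of_tendsto hql
        (eventually_atTop.mpr ⟨1, fun n hn => hmonoB 1 n hn (F n).hqB⟩)
    have h3 := (hFrel 0).2.2.2.1 h2
    rwa [hF0] at h3
  -- limit points act the same
  have hx1 : Tendsto (fun n => (F n).p • x) atTop (nhds (pl • x)) :=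
    hpl.smul tendsto_const_nhds
  have hy1 : Tendsto (fun n => (F n).q • y) atTop (nhds (ql • y)) :=
    hql.smul tendsto_const_nhds
  have hx1' : Tendsto (fun n => (F (n + 1)).p • x) atTop (nhds (pl • x)) :=
    hx1.comp (tendsto_add_atTop_nat 1)
  have hy1' : Tendsto (fun n => (F (n + 1)).q • y) atTop (nhds (ql • y)) :=
    hy1.comp (tendsto_add_atTop_nat 1)
  have hshift : Tendsto (fun n => dist ((F (n + 1)).p • x) ((F (n + 1)).q • y)) atTop
      (nhds 0) :=
    squeeze_zero (fun n => dist_nonneg)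
      (fun n => le_of_lt (hFrel n).2.2.2.2.2.2)
      (tendsto_pow_atTop_nhds_zero_of_lt_one (by norm_num) (by norm_num))
  have heq : dist (pl • x) (ql • y) = 0 := tendsto_nhds_unique (hx1'.dist hy1') hshift
  have heq2 : pl • x = ql • y := by rwa [dist_eq_zero] at heq
  -- conclude
  have hsub : A0 ⊆ V1 ∩ V2 := interior_subset
  have hmemU : ql⁻¹ * pl ∈ U :=
    hV12 (Set.mk_mem_prod (hsub hqlA0).1 (hsub hplA0).2)
  exact ⟨ql⁻¹ * pl, hmemU, by
    show (ql⁻¹ * pl) • x = y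
    rw [mul_smul, heq2, inv_smul_smul]⟩

end Eff

/-- For a continuous action of a Polish group `G` on a Polish metric space `X`:
if the action is uniformly weakly micro-transitive (for every neighborhood `U` of the
identity there is `δ > 0` with `B_δ(x) ∩ cl(Gx) ⊆ cl(Ux)` for all `x`), then it is
uniformly micro-transitive (`B_δ(x) ∩ Gx ⊆ Ux` for all `x`). -/
theorem stmt_17 {G : Type*} [TopologicalSpace G] [Group G] [IsTopologicalGroup G]
    [PolishSpace G] {X : Type*} [MetricSpace X] [PolishSpace X]
    [MulAction G X] [ContinuousSMul G X]
    (huwmt : ∀ U ∈ nhds (1 : G), ∃ δ > (0 : ℝ), ∀ x : X,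
      Metric.ball x δ ∩ closure (MulAction.orbit G x) ⊆
        closure ((fun g : G => g • x) '' U)) :
    ∀ U ∈ nhds (1 : G), ∃ δ > (0 : ℝ), ∀ x : X,
      Metric.ball x δ ∩ MulAction.orbit G x ⊆ (fun g : G => g • x) '' U := by
  letI := TopologicalSpace.upgradeIsCompletelyMetrizable G
  exact @effros_main G _ _ (by exact ‹IsTopologicalGroup G›) X _ _
    (by exact ‹ContinuousSMul G X›) _ huwmt
end

section
/- Let G ↷ X be a transitive, continuous isometric action of a topological group on a metric space (X,d), which is uniformly weakly micro-transitive and topologically transitive (every orbit dense). Then every bounded continuous function f : X → ℝ that is right uniformly continuous with respect to the action (for every ε > 0 there is a neighborhood V of the identity with sup_x |f(vx) − f(x)| < ε for all v ∈ V) is uniformly continuous with respect to the metric d. -/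
/-- Let `G ↷ X` be a continuous isometric action of a topological group on a metric
space which is topologically transitive (every orbit dense) and uniformly weakly
micro-transitive. Then every bounded continuous right uniformly continuous function
`f : X → ℝ` is uniformly continuous with respect to the metric. -/
theorem stmt_18 {G : Type*} [TopologicalSpace G] [Group G] [IsTopologicalGroup G]
    {X : Type*} [MetricSpace X] [MulAction G X] [ContinuousSMul G X]
    (hiso : ∀ (g : G) (a b : X), dist (g • a) (g • b) = dist a b)
    (htt : ∀ x : X, Dense (MulAction.orbit G x))
    (huwmt : ∀ U ∈ nhds (1 : G), ∃ δ > (0 : ℝ), ∀ x : X,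
      Metric.ball x δ ⊆ closure ((fun g : G => g • x) '' U))
    (f : X → ℝ) (hfb : ∃ C : ℝ, ∀ x : X, |f x| ≤ C) (hfc : Continuous f)
    (hruc : ∀ ε : ℝ, 0 < ε →
      ∃ U ∈ nhds (1 : G), ∀ g ∈ U, ∀ x : X, |f (g • x) - f x| < ε) :
    UniformContinuous f := by
  rw [Metric.uniformContinuous_iff]
  intro ε hε
  obtain ⟨U, hU, hUf⟩ := hruc (ε / 2) (by linarith)
  obtain ⟨δ, hδ, hδball⟩ := huwmt U hU
  refine ⟨δ, hδ, fun {x y} hxy => ?_⟩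
  -- note ball is centered at second argument? dist x y < δ means x ∈ ball y δ
  have hx : x ∈ closure ((fun g : G => g • y) '' U) :=
    hδball y (by simpa [Metric.mem_ball, dist_comm] using hxy)
  have hC : x ∈ {z : X | |f z - f y| ≤ ε / 2} := by
    have hclosed : IsClosed {z : X | |f z - f y| ≤ ε / 2} :=
      isClosed_le (by continuity) continuous_const
    refine (closure_minimal ?_ hclosed) hx
    rintro _ ⟨g, hg, rfl⟩
    exact le_of_lt (hUf g hg y)
  have : |f x - f y| ≤ ε / 2 := hC
  calc dist (f x) (f y) = |f x - f y| := Real.dist_eq _ _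
    _ ≤ ε / 2 := this
    _ < ε := by linarith
end
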